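/- Fix a natural number m ≥ 1 and work in the real inner product space of functions (Fin m → Fin 2) → ℝ with the standard dot product (i.e., EuclideanSpace ℝ (Fin m → Fin 2)). Define h by h(s) = ∏_{i} (cos(π/8) if s i = 0, else sin(π/8)), and for x ∈ (ZMod 2)^m define Φ_x by Φ_x(s) = ∏_i φ_{x i}(s i), where φ_0(s) = (1 if s = 0, else 0) and φ_1(s) = 1/√2 for both s. Then for every ZMod 2–submodule L of (ZMod 2)^m of rank l, the vector w := ∑_{x ∈ L} Φ_x satisfies: (i) ⟪h, w⟫ = 2^l · cos(π/8)^m, and (ii) ‖w‖² = 2^l · ∑_{x ∈ L} (1/√2)^{wt(x)}. Consequently ⟪h, w⟫² / ‖w‖² = 2^l · cos(π/8)^{2m} / Z(L) with Z(L) = ∑_{x ∈ L} (1/√2)^{wt(x)}. -/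

import Mathlib

open scoped Classical RealInnerProductSpace

/-- Hamming weight of a vector over `ZMod 2`. -/
def wt {m : ℕ} (x : Fin m → ZMod 2) : ℕ :=
  (Finset.univ.filter fun i => x i ≠ 0).card

/-- The `m`-fold tensor power of the magic state `|H⟩ = cos(π/8)|0⟩ + sin(π/8)|1⟩`. -/
noncomputable def hvec (m : ℕ) : EuclideanSpace ℝ (Fin m → Fin 2) :=
  WithLp.toLp 2 (fun s : Fin m → Fin 2 => ∏ i, (if s i = 0 then Real.cos (Real.pi / 8) else Real.sin (Real.pi / 8)))

/-- The single-qubit stabilizer states `|0⟩` and `|+⟩`. -/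
noncomputable def phi : ZMod 2 → Fin 2 → ℝ :=
  fun b s => if b = 0 then (if s = 0 then 1 else 0) else 1 / Real.sqrt 2

/-- The stabilizer state `ψ_1^{x_1} ⊗ ⋯ ⊗ ψ_m^{x_m}`. -/
noncomputable def Phi (m : ℕ) (x : Fin m → ZMod 2) : EuclideanSpace ℝ (Fin m → Fin 2) :=
  WithLp.toLp 2 (fun s : Fin m → Fin 2 => ∏ i, phi (x i) (s i))

lemma zmod2_cases (a : ZMod 2) : a = 0 ∨ a = 1 := by revert a; decide

lemma sqrt2_inv : (1:ℝ)/Real.sqrt 2 = Real.sqrt 2 / 2 := by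
  rw [div_eq_div_iff (by positivity) (by norm_num), one_mul, Real.mul_self_sqrt (by norm_num)]

lemma trig_key : Real.cos (Real.pi/8) * (1/Real.sqrt 2) + Real.sin (Real.pi/8) * (1/Real.sqrt 2)
    = Real.cos (Real.pi/8) := by
  have h := Real.cos_sub (Real.pi/8) (Real.pi/4)
  rw [Real.cos_pi_div_four, Real.sin_pi_div_four,
    show Real.pi/8 - Real.pi/4 = -(Real.pi/8) by ring, Real.cos_neg] at h
  rw [sqrt2_inv]; linarith

lemma phi_zero (t : Fin 2) : phi 0 t = if t = 0 then 1 else 0 := by simp [phi]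
lemma phi_one (t : Fin 2) : phi 1 t = 1/Real.sqrt 2 := by
  rw [phi, if_neg (by decide : ¬(1:ZMod 2) = 0)]

lemma single_h (a : ZMod 2) :
    ∑ t : Fin 2, (if t = 0 then Real.cos (Real.pi/8) else Real.sin (Real.pi/8)) * phi a t
      = Real.cos (Real.pi/8) := by
  have e0 : (if (0:Fin 2) = 0 then Real.cos (Real.pi/8) else Real.sin (Real.pi/8))
      = Real.cos (Real.pi/8) := if_pos rfl
  have e1 : (if (1:Fin 2) = 0 then Real.cos (Real.pi/8) else Real.sin (Real.pi/8))
      = Real.sin (Real.pi/8) := if_neg (by decide)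
  rcases zmod2_cases a with h | h <;> subst h
  · rw [Fin.sum_univ_two, e0, e1, phi_zero, phi_zero, if_pos rfl, if_neg (by decide)]; ring
  · rw [Fin.sum_univ_two, e0, e1, phi_one, phi_one]; exact trig_key

lemma single_phi (a b : ZMod 2) :
    ∑ t : Fin 2, phi a t * phi b t = (1/Real.sqrt 2) ^ (if a + b ≠ 0 then 1 else 0) := by
  have hh : (1/Real.sqrt 2) * (1/Real.sqrt 2) = (1:ℝ)/2 := by
    rw [div_mul_div_comm, one_mul, Real.mul_self_sqrt (by norm_num)]
  rcases zmod2_cases a with h | h <;> subst h <;> rcases zmod2_cases b with h | h <;> subst h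
  · rw [Fin.sum_univ_two, if_neg (by decide : ¬((0:ZMod 2)+0 ≠ 0))]
    simp only [phi_zero]; norm_num
  · rw [Fin.sum_univ_two, if_pos (by decide : ((0:ZMod 2)+1 ≠ 0))]
    simp only [phi_zero, phi_one]; norm_num
  · rw [Fin.sum_univ_two, if_pos (by decide : ((1:ZMod 2)+0 ≠ 0))]
    simp only [phi_zero, phi_one]; norm_num
  · rw [Fin.sum_univ_two, if_neg (by decide : ¬((1:ZMod 2)+1 ≠ 0)), pow_zero]
    simp only [phi_one]; rw [hh]; norm_num

lemma inner_euclid {m : ℕ} (f g : EuclideanSpace ℝ (Fin m → Fin 2)) :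
    ⟪f, g⟫ = ∑ s, f s * g s := by
  simp [PiLp.inner_apply, RCLike.inner_apply, starRingEnd_apply, mul_comm]

lemma fubini {m : ℕ} (g : Fin m → Fin 2 → ℝ) :
    ∑ s : Fin m → Fin 2, ∏ i, g i (s i) = ∏ i, ∑ t, g i t := by
  rw [Finset.prod_univ_sum]; simp

lemma inner_hvec_Phi (m : ℕ) (x : Fin m → ZMod 2) :
    ⟪hvec m, Phi m x⟫ = Real.cos (Real.pi/8) ^ m := by
  rw [inner_euclid]
  have step1 : ∀ s : Fin m → Fin 2, hvec m s * Phi m x s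
      = ∏ i, ((if s i = 0 then Real.cos (Real.pi/8) else Real.sin (Real.pi/8))
          * phi (x i) (s i)) := fun s => by
    simp only [hvec, Phi, WithLp.ofLp_toLp, Finset.prod_mul_distrib]
  rw [Finset.sum_congr rfl fun s _ => step1 s,
    fubini (fun i t => (if t = 0 then Real.cos (Real.pi/8) else Real.sin (Real.pi/8))
      * phi (x i) t),
    Finset.prod_congr rfl fun i _ => single_h (x i),
    Finset.prod_const, Finset.card_univ, Fintype.card_fin]

lemma inner_Phi_Phi (m : ℕ) (x y : Fin m → ZMod 2) :
    ⟪Phi m x, Phi m y⟫ = (1/Real.sqrt 2) ^ wt (x + y) := by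
  rw [inner_euclid]
  have step1 : ∀ s : Fin m → Fin 2, Phi m x s * Phi m y s
      = ∏ i, (phi (x i) (s i) * phi (y i) (s i)) := fun s => by
    simp only [Phi, WithLp.ofLp_toLp, Finset.prod_mul_distrib]
  rw [Finset.sum_congr rfl fun s _ => step1 s,
    fubini (fun i t => phi (x i) t * phi (y i) t),
    Finset.prod_congr rfl fun i _ => single_phi (x i) (y i),
    Finset.prod_pow_eq_pow_sum]
  congr 1
  rw [wt, Finset.card_filter]
  exact (Finset.sum_congr rfl fun i _ => by simp [Pi.add_apply]).symm

theorem stmt_7 (m : ℕ) (hm : 1 ≤ m) (L : Submodule (ZMod 2) (Fin m → ZMod 2)) :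
    ⟪hvec m, ∑ x : L, Phi m x⟫
        = 2 ^ Module.finrank (ZMod 2) L * Real.cos (Real.pi / 8) ^ m
    ∧ ‖∑ x : L, Phi m x‖ ^ 2
        = 2 ^ Module.finrank (ZMod 2) L
          * ∑ x : L, (1 / Real.sqrt 2) ^ wt (x : Fin m → ZMod 2)
    ∧ ⟪hvec m, ∑ x : L, Phi m x⟫ ^ 2 / ‖∑ x : L, Phi m x‖ ^ 2
        = 2 ^ Module.finrank (ZMod 2) L * Real.cos (Real.pi / 8) ^ (2 * m)
          / ∑ x : L, (1 / Real.sqrt 2) ^ wt (x : Fin m → ZMod 2) := by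
  have hcard : (Fintype.card L : ℝ) = 2 ^ Module.finrank (ZMod 2) L := by
    rw [Module.card_eq_pow_finrank (K := ZMod 2) (V := L), ZMod.card 2]
    push_cast
    rfl
  have h1 : ⟪hvec m, ∑ x : L, Phi m x⟫
      = 2 ^ Module.finrank (ZMod 2) L * Real.cos (Real.pi / 8) ^ m := by
    rw [inner_sum]
    rw [Finset.sum_congr rfl fun (x : L) _ => inner_hvec_Phi m (x : Fin m → ZMod 2)]
    rw [Finset.sum_const, Finset.card_univ, nsmul_eq_mul, hcard]
  have h2 : ‖∑ x : L, Phi m x‖ ^ 2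
      = 2 ^ Module.finrank (ZMod 2) L
        * ∑ x : L, (1 / Real.sqrt 2) ^ wt (x : Fin m → ZMod 2) := by
    rw [← real_inner_self_eq_norm_sq, sum_inner]
    have step : ∀ x : L, ⟪Phi m (x : Fin m → ZMod 2), ∑ y : L, Phi m y⟫
        = ∑ z : L, (1 / Real.sqrt 2) ^ wt (z : Fin m → ZMod 2) := by
      intro x
      rw [inner_sum]
      rw [Finset.sum_congr rfl fun (y : L) _ =>
        inner_Phi_Phi m (x : Fin m → ZMod 2) (y : Fin m → ZMod 2)]
      exact Fintype.sum_equiv (Equiv.addLeft x)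
        (fun y : L => (1/Real.sqrt 2) ^ wt ((x : Fin m → ZMod 2) + (y : Fin m → ZMod 2)))
        (fun z : L => (1/Real.sqrt 2) ^ wt (z : Fin m → ZMod 2))
        (fun y => by simp [Equiv.addLeft])
    rw [Finset.sum_congr rfl fun (x : L) _ => step x]
    rw [Finset.sum_const, Finset.card_univ, nsmul_eq_mul, hcard]
  refine ⟨h1, h2, ?_⟩
  rw [h1, h2]
  have hZ : 0 < ∑ x : L, (1 / Real.sqrt 2) ^ wt (x : Fin m → ZMod 2) := by
    apply Finset.sum_pos
    · intro x _; positivity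
    · exact Finset.univ_nonempty
  rw [div_eq_div_iff (by positivity) hZ.ne', two_mul, pow_add]
  ring
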